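/- A countable intersection of open dense-segment sets containing all segments between points of a countable dense set R ⊆ ℝ^d can be chosen inside the open unit ball with Hausdorff dimension one: i.e., there exists a G_δ set O ⊆ B(0,1) of Hausdorff dimension one with [r,s] ⊆ O for all r, s ∈ R. -/

import Mathlib

open Set Metric MeasureTheory Filter ENNReal NNReal Topology

section Segment
variable {E : Type*} [NormedAddCommGroup E] [NormedSpace ℝ E]

lemma lineMap_lipschitz (x y : E) :
    LipschitzWith ‖y - x‖₊ (fun θ : ℝ => x + θ • (y - x)) := by
  apply LipschitzWith.of_dist_le_mul
  intro a b
  simp only [dist_eq_norm, add_sub_add_left_eq_sub, ← sub_smul, norm_smul,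
    Real.norm_eq_abs, coe_nnnorm]
  rw [mul_comm]

lemma dimH_segment_le (x y : E) : dimH (segment ℝ x y) ≤ 1 := by
  rw [segment_eq_image']
  calc dimH ((fun θ : ℝ => x + θ • (y - x)) '' Icc 0 1)
      ≤ dimH (Icc (0:ℝ) 1) := (lineMap_lipschitz x y).dimH_image_le _
    _ ≤ dimH (univ : Set ℝ) := dimH_mono (subset_univ _)
    _ = 1 := Real.dimH_univ

lemma dimH_Icc01 : dimH (Icc (0:ℝ) 1) = 1 := by
  rw [Real.dimH_of_nonempty_interior, Module.finrank_self, Nat.cast_one]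
  rw [interior_Icc]
  exact ⟨1/2, by norm_num⟩

lemma one_le_dimH_segment {x y : E} (h : x ≠ y) : 1 ≤ dimH (segment ℝ x y) := by
  have hv : y - x ≠ 0 := sub_ne_zero.mpr h.symm
  have hanti : AntilipschitzWith (‖y - x‖₊⁻¹) (fun θ : ℝ => x + θ • (y - x)) := by
    apply AntilipschitzWith.of_le_mul_dist
    intro a b
    simp only [dist_eq_norm, add_sub_add_left_eq_sub, ← sub_smul, norm_smul,
      Real.norm_eq_abs, coe_nnnorm]
    rw [NNReal.coe_inv, coe_nnnorm]
    rw [mul_comm |a - b|, inv_mul_cancel_left₀ (norm_ne_zero_iff.mpr hv)]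
  calc (1:ℝ≥0∞) = dimH (Icc (0:ℝ) 1) := dimH_Icc01.symm
    _ ≤ dimH ((fun θ : ℝ => x + θ • (y - x)) '' Icc 0 1) := hanti.le_dimH_image _
    _ = dimH (segment ℝ x y) := by rw [segment_eq_image']

end Segment

section Cover
variable {X : Type*} [MetricSpace X] [MeasurableSpace X] [BorelSpace X]

lemma cover_lemma {d : ℝ} (hd : 1 ≤ d) {S : Set X} (h : μH[d] S = 0)
    {ε : ℝ≥0∞} (hε0 : 0 < ε) (hε1 : ε ≤ 1) :
    ∃ U : ℕ → Set X, (∀ n, IsOpen (U n)) ∧ S ⊆ ⋃ n, U n ∧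
      (∀ n, EMetric.diam (U n) ≤ ε) ∧ ∑' n, EMetric.diam (U n) ^ d ≤ ε := by
  classical
  have hd0 : (0:ℝ) < d := lt_of_lt_of_le one_pos hd
  have h2d_ne_top : (2:ℝ≥0∞) ^ d ≠ ∞ :=
    (ENNReal.rpow_lt_top_of_nonneg hd0.le (by norm_num)).ne
  have h2d_ne_zero : (2:ℝ≥0∞) ^ d ≠ 0 := by
    simp [ENNReal.rpow_eq_zero_iff]
  set c : ℝ≥0∞ := ε / 2 ^ d / 4 with hc
  have hc0 : c ≠ 0 := by
    rw [hc]
    exact ENNReal.div_ne_zero.mpr ⟨ENNReal.div_ne_zero.mpr ⟨hε0.ne', h2d_ne_top⟩, by norm_num⟩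
  have h2dc : (2:ℝ≥0∞) ^ d * c = ε / 4 := by
    rw [hc, ← mul_div_assoc, ENNReal.mul_div_cancel h2d_ne_zero h2d_ne_top]
  have hcle : c ≤ ε / 4 := by
    rw [← h2dc]
    conv_lhs => rw [← one_mul c]
    gcongr
    calc (1:ℝ≥0∞) = 2 ^ (0:ℝ) := by simp
      _ ≤ 2 ^ d := ENNReal.rpow_le_rpow_of_exponent_le (by norm_num) hd0.le
  have hε4 : ε / 4 ≤ ε / 2 := ENNReal.div_le_div le_rfl (by norm_num)
  have hε2 : ε / 2 ≤ ε := by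
    calc ε / 2 ≤ ε / 1 := ENNReal.div_le_div le_rfl (by norm_num)
      _ = ε := by simp
  have hcε : c ≤ ε := hcle.trans (hε4.trans hε2)
  have hctop : c ≠ ∞ := (hcε.trans_lt (hε1.trans_lt (by norm_num))).ne
  -- extract a cover at scale ε/2 with sum < c
  rw [MeasureTheory.Measure.hausdorffMeasure_apply] at h
  simp only [ENNReal.iSup_eq_zero] at h
  have h2 : (⨅ (t : ℕ → Set X) (_ : S ⊆ ⋃ n, t n) (_ : ∀ n, EMetric.diam (t n) ≤ ε / 2),
      ∑' n, ⨆ _ : (t n).Nonempty, EMetric.diam (t n) ^ d) < c := by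
    rw [show (EMetric.diam : Set X → ℝ≥0∞) = Metric.ediam from rfl, h (ε/2) (ENNReal.div_pos hε0.ne' (by norm_num))]
    exact pos_iff_ne_zero.mpr hc0
  simp only [iInf_lt_iff] at h2
  obtain ⟨t, hcov, hdiam, hsum⟩ := h2
  -- enlarge each piece to an open thickening
  set η : ℕ → ℝ≥0∞ := fun n => c * 2⁻¹ ^ n with hηdef
  have hηc : ∀ n, η n ≤ c := by
    intro n
    calc c * 2⁻¹ ^ n ≤ c * 1 := by
          gcongr
          exact pow_le_one' (by norm_num) n
      _ = c := mul_one c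
  have hη0 : ∀ n, η n ≠ 0 := fun n =>
    mul_ne_zero hc0 (pow_ne_zero n (by norm_num))
  have hηtop : ∀ n, η n ≠ ∞ := fun n => ((hηc n).trans_lt (hctop.lt_top)).ne
  have hη1 : ∀ n, η n ≤ 1 := fun n => (hηc n).trans (hcε.trans hε1)
  set δ : ℕ → ℝ≥0 := fun n => (η n).toNNReal / 2 with hδdef
  have hδpos : ∀ n, 0 < δ n := by
    intro n
    have h1 : (η n).toNNReal ≠ 0 := by
      simp [ENNReal.toNNReal_eq_zero_iff, hη0 n, hηtop n]
    rw [hδdef]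
    positivity
  have hδcoe : ∀ n, (δ n : ℝ≥0∞) = η n / 2 := by
    intro n
    show (↑((η n).toNNReal / 2) : ℝ≥0∞) = η n / 2
    rw [ENNReal.coe_div (by norm_num), ENNReal.coe_toNNReal (hηtop n)]
    norm_num
  have h2δ : ∀ n, 2 * (δ n : ℝ≥0∞) = η n := by
    intro n
    rw [hδcoe, ENNReal.mul_div_cancel' (by norm_num) (by norm_num)]
  set U : ℕ → Set X := fun n => if (t n).Nonempty then Metric.thickening (δ n) (t n) else ∅
    with hUdef
  have hUopen : ∀ n, IsOpen (U n) := by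
    intro n
    by_cases hne : (t n).Nonempty <;> simp [hUdef, hne, Metric.isOpen_thickening]
  have hUsub : ∀ n, t n ⊆ U n := by
    intro n x hx
    have hne : (t n).Nonempty := ⟨x, hx⟩
    simp only [hUdef, if_pos hne]
    exact Metric.self_subset_thickening (hδpos n) _ hx
  have hUdiam : ∀ n, EMetric.diam (U n) ≤ EMetric.diam (t n) + η n := by
    intro n
    by_cases hne : (t n).Nonempty
    · simp only [hUdef, if_pos hne]
      refine (Metric.ediam_thickening_le (δ n)).trans ?_
      rw [h2δ n]; exact le_rfl
    · simp [hUdef, if_neg hne, EMetric.diam]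
  refine ⟨U, hUopen, ?_, ?_, ?_⟩
  · intro x hx
    obtain ⟨n, hn⟩ := mem_iUnion.mp (hcov hx)
    exact mem_iUnion.mpr ⟨n, hUsub n hn⟩
  · intro n
    refine (hUdiam n).trans ?_
    calc EMetric.diam (t n) + η n ≤ ε / 2 + ε / 2 :=
          add_le_add (hdiam n) ((hηc n).trans (hcle.trans hε4))
      _ = ε := ENNReal.add_halves ε
  · have key : ∀ n, EMetric.diam (U n) ^ d ≤
        2 ^ d * ((⨆ _ : (t n).Nonempty, EMetric.diam (t n) ^ d) + η n) := by
      intro n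
      by_cases hne : (t n).Nonempty
      · refine (ENNReal.rpow_le_rpow (hUdiam n) hd0.le).trans ?_
        have hmax : EMetric.diam (t n) + η n ≤ 2 * max (EMetric.diam (t n)) (η n) := by
          rw [two_mul]
          exact add_le_add (le_max_left _ _) (le_max_right _ _)
        calc (EMetric.diam (t n) + η n) ^ d
            ≤ (2 * max (EMetric.diam (t n)) (η n)) ^ d := ENNReal.rpow_le_rpow hmax hd0.le
          _ = 2 ^ d * (max (EMetric.diam (t n)) (η n)) ^ d :=
              ENNReal.mul_rpow_of_nonneg _ _ hd0.le
          _ ≤ 2 ^ d * (EMetric.diam (t n) ^ d + η n ^ d) := by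
              gcongr
              rcases max_cases (EMetric.diam (t n)) (η n) with ⟨heq, -⟩ | ⟨heq, -⟩ <;> rw [heq]
              · exact le_add_right le_rfl
              · exact le_add_left le_rfl
          _ ≤ 2 ^ d * ((⨆ _ : (t n).Nonempty, EMetric.diam (t n) ^ d) + η n) := by
              gcongr
              · exact le_iSup_of_le hne le_rfl
              · exact ENNReal.rpow_le_self_of_le_one (hη1 n) hd
      · have : U n = ∅ := by simp [hUdef, if_neg hne]
        simp [this, EMetric.diam_empty, EMetric.diam, ENNReal.zero_rpow_of_pos hd0]
    calc ∑' n, EMetric.diam (U n) ^ d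
        ≤ ∑' n, 2 ^ d * ((⨆ _ : (t n).Nonempty, EMetric.diam (t n) ^ d) + η n) :=
          ENNReal.tsum_le_tsum key
      _ = 2 ^ d * ((∑' n, ⨆ _ : (t n).Nonempty, EMetric.diam (t n) ^ d) + ∑' n, η n) := by
          rw [ENNReal.tsum_mul_left, ENNReal.tsum_add]
      _ ≤ 2 ^ d * (c + 2 * c) := by
          refine mul_le_mul_right (add_le_add hsum.le ?_) _
          calc ∑' n, η n = c * ∑' n, (2⁻¹:ℝ≥0∞) ^ n := by rw [ENNReal.tsum_mul_left]
            _ = c * 2 := by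
                rw [ENNReal.tsum_geometric, ENNReal.one_sub_inv_two, inv_inv]
            _ = 2 * c := mul_comm _ _
            _ ≤ 2 * c := le_rfl
      _ = 3 * (2 ^ d * c) := by ring
      _ ≤ 4 * (2 ^ d * c) := by gcongr <;> norm_num
      _ = ε := by
          rw [h2dc, ENNReal.mul_div_cancel' (by norm_num) (by norm_num)]

lemma envelope_lemma {S : Set X} (h : ∀ d' : ℝ, 1 < d' → μH[d'] S = 0) :
    ∃ O : Set X, S ⊆ O ∧ IsGδ O ∧ dimH O ≤ 1 := by
  set dm : ℕ → ℝ≥0 := fun n => 1 + ((n:ℝ≥0)+1)⁻¹ with hdmdef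
  have hdm1 : ∀ n, (1:ℝ) ≤ ((dm n : ℝ≥0) : ℝ) := by
    intro n
    simp only [hdmdef]
    push_cast
    have : (0:ℝ) < ((n:ℝ)+1)⁻¹ := by positivity
    linarith
  have hdmgt : ∀ n, (1:ℝ) < ((dm n : ℝ≥0) : ℝ) := by
    intro n
    simp only [hdmdef]
    push_cast
    have : (0:ℝ) < ((n:ℝ)+1)⁻¹ := by positivity
    linarith
  have hdmanti : ∀ m n : ℕ, m ≤ n → ((dm n : ℝ≥0) : ℝ) ≤ ((dm m : ℝ≥0) : ℝ) := by
    intro m n hmn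
    simp only [hdmdef]
    push_cast
    have h1 : ((n:ℝ)+1)⁻¹ ≤ ((m:ℝ)+1)⁻¹ := by
      have h2 : (m:ℝ) + 1 ≤ (n:ℝ) + 1 := by exact_mod_cast Nat.succ_le_succ hmn
      exact inv_anti₀ (by positivity) h2
    linarith
  have hcov : ∀ n : ℕ, ∃ U : ℕ → Set X, (∀ i, IsOpen (U i)) ∧ S ⊆ ⋃ i, U i ∧
      (∀ i, EMetric.diam (U i) ≤ (2⁻¹:ℝ≥0∞) ^ n) ∧
      ∑' i, EMetric.diam (U i) ^ ((dm n : ℝ≥0) : ℝ) ≤ (2⁻¹:ℝ≥0∞) ^ n := by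
    intro n
    refine cover_lemma (hdm1 n) (h _ (hdmgt n)) ?_ ?_
    · exact ENNReal.pow_pos (by norm_num) n
    · exact pow_le_one' (by norm_num) n
  choose U hUopen hUcov hUdiam hUsum using hcov
  refine ⟨⋂ n, ⋃ i, U n i, subset_iInter fun n => hUcov n,
    .iInter fun n => (isOpen_iUnion (hUopen n)).isGδ, ?_⟩
  have hmeas : ∀ m : ℕ, μH[((dm m : ℝ≥0) : ℝ)] (⋂ n, ⋃ i, U n i) = 0 := by
    intro m
    refine le_antisymm ?_ zero_le
    have hle := MeasureTheory.Measure.hausdorffMeasure_le_liminf_tsum (l := atTop)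
      ((dm m : ℝ≥0) : ℝ) (⋂ n, ⋃ i, U n i) (fun n => (2⁻¹:ℝ≥0∞) ^ n)
      (ENNReal.tendsto_pow_atTop_nhds_zero_of_lt_one (by norm_num))
      (fun n i => U n i) (Eventually.of_forall fun n i => hUdiam n i)
      (Eventually.of_forall fun n => iInter_subset _ n)
    refine hle.trans (le_antisymm ?_ zero_le).le
    have hev : ∀ᶠ n in atTop,
        (∑' i, EMetric.diam (U n i) ^ ((dm m : ℝ≥0) : ℝ)) ≤ (2⁻¹:ℝ≥0∞) ^ n := by
      filter_upwards [eventually_ge_atTop m] with n hn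
      calc ∑' i, EMetric.diam (U n i) ^ ((dm m : ℝ≥0) : ℝ)
          ≤ ∑' i, EMetric.diam (U n i) ^ ((dm n : ℝ≥0) : ℝ) := by
            refine ENNReal.tsum_le_tsum fun i => ?_
            refine ENNReal.rpow_le_rpow_of_exponent_ge ?_ (hdmanti m n hn)
            exact (hUdiam n i).trans (pow_le_one' (by norm_num) n)
        _ ≤ (2⁻¹:ℝ≥0∞) ^ n := hUsum n
    calc liminf (fun n => ∑' i, EMetric.diam (U n i) ^ ((dm m : ℝ≥0) : ℝ)) atTop
        ≤ liminf (fun n => (2⁻¹:ℝ≥0∞) ^ n) atTop := liminf_le_liminf hev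
      _ = 0 := (ENNReal.tendsto_pow_atTop_nhds_zero_of_lt_one (by norm_num)).liminf_eq
  have hbound : ∀ m : ℕ, dimH (⋂ n, ⋃ i, U n i) ≤ ((dm m : ℝ≥0) : ℝ≥0∞) := by
    intro m
    exact dimH_le_of_hausdorffMeasure_ne_top (by rw [hmeas m]; exact ENNReal.zero_ne_top)
  have htend : Tendsto (fun m : ℕ => ((dm m : ℝ≥0) : ℝ≥0∞)) atTop (𝓝 1) := by
    rw [← ENNReal.coe_one]
    rw [ENNReal.tendsto_coe]
    rw [← NNReal.tendsto_coe]
    have : Tendsto (fun m : ℕ => ((dm m : ℝ≥0) : ℝ)) atTop (𝓝 (1 + 0)) := by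
      simp only [hdmdef]
      push_cast
      exact tendsto_const_nhds.add (tendsto_one_div_add_atTop_nhds_zero_nat.congr
        (by intro n; rw [one_div]))
    simpa using this
  exact ge_of_tendsto' htend hbound

end Cover


theorem stmt14 (d : ℕ) (hd : 1 ≤ d)
    (R : Set (EuclideanSpace ℝ (Fin d))) (hRsub : R ⊆ Metric.ball 0 1)
    (hRcount : R.Countable)
    (hRdense : ∀ x ∈ Metric.ball (0 : EuclideanSpace ℝ (Fin d)) 1,
      ∀ ε > 0, ∃ r ∈ R, ‖r - x‖ < ε) :
    ∃ O : Set (EuclideanSpace ℝ (Fin d)), O ⊆ Metric.ball 0 1 ∧ IsGδ O ∧ dimH O = 1 ∧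
      ∀ r ∈ R, ∀ s ∈ R, segment ℝ r s ⊆ O := by
  classical
  set S : Set (EuclideanSpace ℝ (Fin d)) := ⋃ r ∈ R, ⋃ s ∈ R, segment ℝ r s with hSdef
  have hsegS : ∀ r ∈ R, ∀ s ∈ R, segment ℝ r s ⊆ S := by
    intro r hr s hs x hx
    exact mem_biUnion hr (mem_biUnion hs hx)
  have hSdim : dimH S ≤ 1 := by
    rw [hSdef, dimH_bUnion hRcount]
    refine iSup₂_le fun r _ => ?_
    rw [dimH_bUnion hRcount]
    exact iSup₂_le fun s _ => dimH_segment_le r s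
  have hSball : S ⊆ Metric.ball 0 1 := by
    rw [hSdef]
    refine iUnion₂_subset fun r hr => iUnion₂_subset fun s hs => ?_
    exact (convex_ball (0 : EuclideanSpace ℝ (Fin d)) 1).segment_subset
      (hRsub hr) (hRsub hs)
  have hSmeas : ∀ d' : ℝ, 1 < d' → μH[d'] S = 0 := by
    intro d' hd'
    have h1 : (1:ℝ≥0) < d'.toNNReal := by
      rw [← Real.toNNReal_one]
      exact (Real.toNNReal_lt_toNNReal_iff (by linarith)).mpr hd'
    have h2 : dimH S < (d'.toNNReal : ℝ≥0∞) :=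
      lt_of_le_of_lt hSdim (by exact_mod_cast h1)
    have h3 := hausdorffMeasure_of_dimH_lt h2
    rwa [Real.coe_toNNReal d' (by linarith)] at h3
  obtain ⟨O', hSO', hGδ', hdim'⟩ := envelope_lemma hSmeas
  -- two distinct points of R
  set i : Fin d := ⟨0, hd⟩ with hidef
  set y : EuclideanSpace ℝ (Fin d) := EuclideanSpace.single i (2⁻¹ : ℝ) with hydef
  have hynorm : ‖y‖ = 2⁻¹ := by
    rw [hydef, EuclideanSpace.norm_single]
    norm_num
  have hymem : y ∈ Metric.ball (0 : EuclideanSpace ℝ (Fin d)) 1 := by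
    rw [mem_ball_zero_iff, hynorm]; norm_num
  have hymem' : -y ∈ Metric.ball (0 : EuclideanSpace ℝ (Fin d)) 1 := by
    rw [mem_ball_zero_iff, norm_neg, hynorm]; norm_num
  obtain ⟨r₁, hr₁R, hr₁⟩ := hRdense y hymem 4⁻¹ (by norm_num)
  obtain ⟨r₂, hr₂R, hr₂⟩ := hRdense (-y) hymem' 4⁻¹ (by norm_num)
  have hne : r₁ ≠ r₂ := by
    intro hEq
    have hyy : ‖y - -y‖ = 1 := by
      rw [sub_neg_eq_add, ← two_smul ℝ y, norm_smul, hynorm]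
      norm_num
    have htri : ‖y - -y‖ ≤ ‖y - r₁‖ + ‖r₁ - -y‖ := norm_sub_le_norm_sub_add_norm_sub _ _ _
    rw [hyy, ← norm_neg (y - r₁), neg_sub] at htri
    rw [hEq] at htri
    have := hr₂
    rw [show r₂ - -y = r₂ - -y from rfl] at this
    have h4 : ‖r₂ - -y‖ < 4⁻¹ := by
      simpa [sub_neg_eq_add] using hr₂
    have h5 : ‖r₂ - y‖ < 4⁻¹ := by
      rw [← hEq]; exact hr₁
    linarith
  refine ⟨O' ∩ Metric.ball 0 1, inter_subset_right, hGδ'.inter Metric.isOpen_ball.isGδ,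
    ?_, ?_⟩
  · refine le_antisymm ((dimH_mono inter_subset_left).trans hdim') ?_
    have hseg : segment ℝ r₁ r₂ ⊆ O' ∩ Metric.ball 0 1 :=
      subset_inter ((hsegS r₁ hr₁R r₂ hr₂R).trans hSO')
        ((hsegS r₁ hr₁R r₂ hr₂R).trans hSball)
    exact (one_le_dimH_segment hne).trans (dimH_mono hseg)
  · intro r hr s hs
    exact subset_inter ((hsegS r hr s hs).trans hSO') ((hsegS r hr s hs).trans hSball)
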